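/- There exists a universal constant c₁ > 0 with the following property. Let ρ ∈ (0,1), let n ≥ 2 be an integer, and set τ = (1/2)·min{ρ√n, 1}. Then for every x₀ ∈ ℝⁿ with 1 − τ/n ≤ |x₀| ≤ 1, one has λ({ y ∈ ℝⁿ : |y| ≤ ρ and |x₀ + y| > (1 + ρ²)^{1/2} }) ≥ c₁·λ(ρBⁿ), where |·| denotes the Euclidean norm. -/

import Mathlib

open MeasureTheory Real Metric


lemma gamma_ratio {t : ℝ} (ht : 1/2 < t) :
    Real.sqrt (t - 1/2) * Real.Gamma t ≤ Real.Gamma (t + 1/2) := by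
  have hx : (0:ℝ) < t - 1/2 := by linarith
  have ht0 : (0:ℝ) < t := by linarith
  have hy : (0:ℝ) < t + 1/2 := by linarith
  have ha := Real.Gamma_pos_of_pos hx
  have hb := Real.Gamma_pos_of_pos hy
  have hc := Real.Gamma_pos_of_pos ht0
  have hG := Real.convexOn_log_Gamma.2 (Set.mem_Ioi.2 hx) (Set.mem_Ioi.2 hy)
    (by norm_num : (0:ℝ) ≤ 1/2) (by norm_num : (0:ℝ) ≤ 1/2) (by norm_num)
  have hmid : (1/2:ℝ) • (t - 1/2) + (1/2:ℝ) • (t + 1/2) = t := by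
    rw [smul_eq_mul, smul_eq_mul]; ring
  rw [hmid] at hG
  simp only [Function.comp_apply, smul_eq_mul] at hG
  have h2 : Real.Gamma t ^ 2 ≤ Real.Gamma (t - 1/2) * Real.Gamma (t + 1/2) := by
    have hlog : Real.log (Real.Gamma t ^ 2)
        ≤ Real.log (Real.Gamma (t - 1/2) * Real.Gamma (t + 1/2)) := by
      rw [Real.log_pow, Real.log_mul (ne_of_gt ha) (ne_of_gt hb)]
      push_cast; linarith
    exact (Real.log_le_log_iff (by positivity) (by positivity)).1 hlog
  have hGadd : Real.Gamma (t + 1/2) = (t - 1/2) * Real.Gamma (t - 1/2) := by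
    rw [show t + 1/2 = (t - 1/2) + 1 by ring, Real.Gamma_add_one (ne_of_gt hx)]
  have h3 : (Real.sqrt (t - 1/2) * Real.Gamma t) ^ 2 ≤ Real.Gamma (t + 1/2) ^ 2 := by
    rw [mul_pow, Real.sq_sqrt hx.le]
    calc (t - 1/2) * Real.Gamma t ^ 2
        ≤ (t - 1/2) * (Real.Gamma (t - 1/2) * Real.Gamma (t + 1/2)) := by
          exact mul_le_mul_of_nonneg_left h2 hx.le
      _ = Real.Gamma (t + 1/2) ^ 2 := by rw [hGadd]; ring
  have := Real.sqrt_le_sqrt h3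
  rwa [Real.sqrt_sq (by positivity), Real.sqrt_sq hb.le] at this

lemma small_ball_subset {ρ : ℝ} (hρ0 : 0 < ρ) (hρ1 : ρ < 1) {n : ℕ} (hn : 2 ≤ n)
    (x₀ : EuclideanSpace ℝ (Fin n))
    (hx1 : 1 - (1 / 2) * min (ρ * Real.sqrt n) 1 / n ≤ ‖x₀‖) :
    closedBall (((15/16)*ρ/‖x₀‖) • x₀) (ρ/16) ⊆
      {y : EuclideanSpace ℝ (Fin n) | ‖y‖ ≤ ρ ∧ Real.sqrt (1 + ρ ^ 2) < ‖x₀ + y‖} := by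
  have hn2 : (2:ℝ) ≤ (n:ℝ) := by exact_mod_cast hn
  have hs2 : Real.sqrt 2 ≤ Real.sqrt n := Real.sqrt_le_sqrt hn2
  have h14 : (1.4:ℝ) ≤ Real.sqrt 2 := by
    rw [show (1.4:ℝ) = Real.sqrt (1.4^2) by rw [Real.sqrt_sq]; norm_num]
    exact Real.sqrt_le_sqrt (by norm_num)
  have hnn : Real.sqrt n * Real.sqrt n = (n:ℝ) := Real.mul_self_sqrt (by positivity)
  have hτ : (1 / 2) * min (ρ * Real.sqrt n) 1 / n ≤ 3*ρ/8 := by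
    have h1 : min (ρ * Real.sqrt n) 1 ≤ ρ * Real.sqrt n := min_le_left _ _
    have h2 : (1 / 2) * min (ρ * Real.sqrt n) 1 / n ≤ ρ * Real.sqrt n / (2*n) := by
      rw [div_le_div_iff₀ (by positivity) (by positivity)]; nlinarith
    refine h2.trans ?_
    rw [div_le_div_iff₀ (by positivity) (by norm_num)]
    have h3 : (8:ℝ) ≤ 6 * Real.sqrt n := by nlinarith
    nlinarith [mul_le_mul_of_nonneg_left h3 (mul_nonneg hρ0.le (Real.sqrt_nonneg n))]
  have hx : 1 - 3*ρ/8 ≤ ‖x₀‖ := by linarith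
  have hx0 : 0 < ‖x₀‖ := by nlinarith
  intro y hy
  rw [mem_closedBall, dist_eq_norm] at hy
  set y₀ : EuclideanSpace ℝ (Fin n) := ((15/16)*ρ/‖x₀‖) • x₀ with hy₀
  have hny₀ : ‖y₀‖ = 15/16*ρ := by
    rw [hy₀, norm_smul, Real.norm_eq_abs, abs_of_pos (by positivity)]
    field_simp
  have hxy₀ : ‖x₀ + y₀‖ = ‖x₀‖ + 15/16*ρ := by
    have : x₀ + y₀ = (1 + (15/16)*ρ/‖x₀‖) • x₀ := by rw [hy₀, add_smul, one_smul]
    rw [this, norm_smul, Real.norm_eq_abs, abs_of_pos (by positivity)]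
    field_simp
  constructor
  · calc ‖y‖ = ‖y₀ + (y - y₀)‖ := by congr 1; abel
      _ ≤ ‖y₀‖ + ‖y - y₀‖ := norm_add_le _ _
      _ ≤ 15/16*ρ + ρ/16 := by rw [hny₀]; linarith
      _ = ρ := by ring
  · have hlow : 1 + ρ/2 ≤ ‖x₀ + y‖ := by
      have : ‖x₀ + y₀‖ - ‖y - y₀‖ ≤ ‖x₀ + y‖ := by
        have h := norm_sub_norm_le (x₀ + y₀) (x₀ + y)
        have : x₀ + y₀ - (x₀ + y) = -(y - y₀) := by abel
        rw [this, norm_neg] at h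
        linarith [abs_le.1 (abs_norm_sub_norm_le (x₀ + y₀) (x₀ + y))]
      rw [hxy₀] at this
      linarith
    have : Real.sqrt (1 + ρ^2) < 1 + ρ/2 := by
      rw [show (1:ℝ) + ρ/2 = Real.sqrt ((1+ρ/2)^2) by rw [Real.sqrt_sq]; positivity]
      apply Real.sqrt_lt_sqrt (by positivity)
      nlinarith
    linarith

lemma slab_volume {m : ℕ} (a₁ a₂ c₁ c₂ : ℝ) (hc₁ : 0 ≤ c₁) (hc : c₁ ≤ c₂) :
    volume {v : EuclideanSpace ℝ (Fin (m+1)) |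
        v 0 ∈ Set.Icc a₁ a₂ ∧ (∑ i ∈ Finset.univ.erase 0, v i ^ 2) ∈ Set.Icc c₁ c₂}
      = ENNReal.ofReal (a₂ - a₁) *
        (volume (closedBall (0 : EuclideanSpace ℝ (Fin m)) (Real.sqrt c₂))
          - volume (ball (0 : EuclideanSpace ℝ (Fin m)) (Real.sqrt c₁))) := by
  classical
  -- the corresponding set in plain pi space
  set A : Set (Fin m → ℝ) := {w | (∑ j, w j ^ 2) ∈ Set.Icc c₁ c₂} with hA
  have hAmeas : MeasurableSet A := by
    exact measurableSet_preimage
      (Finset.measurable_sum _ (fun i _ => (measurable_pi_apply i).pow_const 2))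
      measurableSet_Icc
  set S : Set (Fin (m+1) → ℝ) := {v | v 0 ∈ Set.Icc a₁ a₂ ∧ (∑ i ∈ Finset.univ.erase 0, v i ^ 2) ∈ Set.Icc c₁ c₂} with hS
  have hSmeas : MeasurableSet S := by
    apply MeasurableSet.inter
    · exact measurableSet_preimage (measurable_pi_apply 0) measurableSet_Icc
    · exact measurableSet_preimage
        (Finset.measurable_sum _ (fun i _ => (measurable_pi_apply i).pow_const 2))
        measurableSet_Icc
  -- step 1: euclidean volume = pi volume
  have step1 : volume {v : EuclideanSpace ℝ (Fin (m+1)) |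
      v 0 ∈ Set.Icc a₁ a₂ ∧ (∑ i ∈ Finset.univ.erase 0, v i ^ 2) ∈ Set.Icc c₁ c₂} = volume S := by
    rw [← (EuclideanSpace.volume_preserving_symm_measurableEquiv_toLp (Fin (m+1))).measure_preimage
      hSmeas.nullMeasurableSet]
    rfl
  -- step 2: split off coordinate 0
  have step2 : S = (MeasurableEquiv.piFinSuccAbove (fun _ : Fin (m+1) => ℝ) 0) ⁻¹'
      ((Set.Icc a₁ a₂) ×ˢ A) := by
    ext v
    simp only [hS, hA, Set.mem_preimage, Set.mem_prod, Set.mem_setOf_eq,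
      MeasurableEquiv.piFinSuccAbove_apply]
    have hsum : (∑ j : Fin m, v ((0:Fin (m+1)).succAbove j) ^ 2)
        = ∑ i ∈ Finset.univ.erase 0, v i ^ 2 := by
      have h1 := Fin.sum_univ_succAbove (fun i => v i ^ 2) 0
      have h2 := Finset.sum_erase_add Finset.univ (fun i => v i ^ 2) (Finset.mem_univ (0 : Fin (m+1)))
      linarith
    rw [show ((Fin.insertNthEquiv (fun _ => ℝ) 0).symm v).1 = v 0 from rfl]
    have h2 : ∀ j : Fin m, ((Fin.insertNthEquiv (fun _ => ℝ) 0).symm v).2 j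
        = v ((0:Fin (m+1)).succAbove j) := fun j => rfl
    simp only [h2, hsum]
  have step3 : volume S = ENNReal.ofReal (a₂ - a₁) * volume A := by
    rw [step2, (volume_preserving_piFinSuccAbove (fun _ : Fin (m+1) => ℝ) 0).measure_preimage
      ((measurableSet_Icc.prod hAmeas).nullMeasurableSet),
      Measure.volume_eq_prod, Measure.prod_prod, Real.volume_Icc]
  -- step 4 : A as annulus in euclidean space
  have step4 : volume A = volume (closedBall (0 : EuclideanSpace ℝ (Fin m)) (Real.sqrt c₂)
      \ ball (0 : EuclideanSpace ℝ (Fin m)) (Real.sqrt c₁)) := by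
    have : (closedBall (0 : EuclideanSpace ℝ (Fin m)) (Real.sqrt c₂)
        \ ball (0 : EuclideanSpace ℝ (Fin m)) (Real.sqrt c₁)) =
        (MeasurableEquiv.toLp 2 (Fin m → ℝ)).symm ⁻¹' A := by
      ext w
      have hnw : ‖w‖ = Real.sqrt (∑ j, w j ^ 2) := by
        rw [EuclideanSpace.norm_eq]
        congr 1
        refine Finset.sum_congr rfl fun j _ => by rw [Real.norm_eq_abs, sq_abs]
      have hsumnn : (0:ℝ) ≤ ∑ j, w j ^ 2 := Finset.sum_nonneg fun j _ => sq_nonneg _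
      have hco : ∀ j, (MeasurableEquiv.toLp 2 (Fin m → ℝ)).symm w j = w j := fun _ => rfl
      simp only [Set.mem_diff, mem_closedBall, mem_ball, dist_zero_right, Set.mem_preimage,
        hA, Set.mem_setOf_eq, Set.mem_Icc, not_lt, hnw, hco]
      constructor
      · rintro ⟨h1, h2⟩
        constructor
        · by_contra hcon
          push_neg at hcon
          have := Real.sqrt_lt_sqrt hsumnn hcon
          linarith
        · by_contra hcon
          push_neg at hcon
          have := Real.sqrt_lt_sqrt (le_trans hc₁ hc) hcon
          linarith
      · rintro ⟨h1, h2⟩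
        exact ⟨Real.sqrt_le_sqrt h2, Real.sqrt_le_sqrt h1⟩
    rw [this, (EuclideanSpace.volume_preserving_symm_measurableEquiv_toLp (Fin m)).measure_preimage
      hAmeas.nullMeasurableSet]
  have step5 : volume (closedBall (0 : EuclideanSpace ℝ (Fin m)) (Real.sqrt c₂)
      \ ball (0 : EuclideanSpace ℝ (Fin m)) (Real.sqrt c₁))
      = volume (closedBall (0 : EuclideanSpace ℝ (Fin m)) (Real.sqrt c₂))
        - volume (ball (0 : EuclideanSpace ℝ (Fin m)) (Real.sqrt c₁)) := by
    apply measure_diff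
    · exact ball_subset_closedBall.trans
        (closedBall_subset_closedBall (Real.sqrt_le_sqrt hc))
    · exact measurableSet_ball.nullMeasurableSet
    · exact measure_ball_lt_top.ne
  rw [step1, step3, step4, step5]

lemma arith_norm_le (ρ w s q Y : ℝ) (hρ0 : 0 < ρ) (hw0 : 0 < w)
    (hs1 : 2*w ≤ s) (hs2 : s ≤ 3*w) (hq2 : q ≤ ρ^2 - 9*w^2)
    (hY : s^2 + q = Y^2) (hY0 : 0 ≤ Y) : Y ≤ ρ := by
  have h1 : Y^2 ≤ ρ^2 := by nlinarith
  nlinarith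

lemma arith_key (ρ w s q X Z : ℝ) (hρ0 : 0 < ρ) (hw0 : 0 < w) (hw10 : w ≤ 1/10)
    (hA : 1 - w/2 ≤ X) (hs1 : 2*w ≤ s) (hs2 : s ≤ 3*w)
    (hq1 : ρ^2 - 10*w^2 ≤ q) (hY : Z^2 = X^2 + 2*(X*s) + (s^2 + q)) :
    1 + ρ^2 < Z^2 := by
  have hXA : (0:ℝ) < 1 - w/2 := by linarith
  have hprod : (1-w/2)*(2*w) ≤ X*s := by
    apply mul_le_mul hA hs1 (by linarith) (by linarith)
  have hss : (2*w)^2 ≤ s^2 := by nlinarith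
  have hA2 : (1-w/2)^2 ≤ X^2 := by nlinarith
  have hww : w^2 ≤ w/10 := by nlinarith
  nlinarith


set_option maxHeartbeats 1000000 in
lemma big_subset {ρ : ℝ} (hρ0 : 0 < ρ) (hρ1 : ρ < 1) {m : ℕ} (hn : 101 ≤ m + 1)
    (x₀ : EuclideanSpace ℝ (Fin (m+1)))
    (hx1 : 1 - (1 / 2) * min (ρ * Real.sqrt (m+1)) 1 / (m+1) ≤ ‖x₀‖) (hx2 : ‖x₀‖ ≤ 1)
    (b : OrthonormalBasis (Fin (m+1)) ℝ (EuclideanSpace ℝ (Fin (m+1))))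
    (hb : b 0 = ‖x₀‖⁻¹ • x₀) (hx0 : 0 < ‖x₀‖) :
    (⇑b.repr) ⁻¹' {v : EuclideanSpace ℝ (Fin (m+1)) |
        v 0 ∈ Set.Icc (2*ρ/Real.sqrt (m+1)) (3*ρ/Real.sqrt (m+1)) ∧
        (∑ i ∈ Finset.univ.erase 0, v i ^ 2) ∈
          Set.Icc (ρ^2*(1-10/(m+1))) (ρ^2*(1-9/(m+1)))} ⊆
      {y : EuclideanSpace ℝ (Fin (m+1)) | ‖y‖ ≤ ρ ∧ Real.sqrt (1 + ρ ^ 2) < ‖x₀ + y‖} := by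
  set N : ℝ := ((m:ℝ) + 1) with hN_def
  have hNcast : ((m:ℝ) + 1) = (((m+1 : ℕ)):ℝ) := by push_cast; ring
  have hn0 : (0:ℝ) < N := by positivity
  have hn100 : (100:ℝ) ≤ N := by
    have : (101:ℝ) ≤ ((m:ℝ)+1) := by exact_mod_cast hn
    linarith
  have hsn : Real.sqrt N * Real.sqrt N = N := Real.mul_self_sqrt hn0.le
  have hsn10 : (10:ℝ) ≤ Real.sqrt N := by
    rw [show (10:ℝ) = Real.sqrt 100 by
      rw [show (100:ℝ) = 10^2 by norm_num, Real.sqrt_sq]; norm_num]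
    exact Real.sqrt_le_sqrt hn100
  have hsnpos : (0:ℝ) < Real.sqrt N := by linarith
  set w : ℝ := ρ / Real.sqrt N with hw_def
  have hw0 : 0 < w := by positivity
  have hw10 : w ≤ 1/10 := by
    rw [hw_def, div_le_div_iff₀ hsnpos (by norm_num)]
    nlinarith
  have hw2 : w^2 = ρ^2 / N := by rw [hw_def, div_pow, Real.sq_sqrt hn0.le]
  -- ‖x₀‖ ≥ 1 - w/2
  have hA : 1 - w/2 ≤ ‖x₀‖ := by
    have h1 : (1 / 2) * min (ρ * Real.sqrt N) 1 / N ≤ (1/2) * (ρ * Real.sqrt N) / N := by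
      gcongr
      exact min_le_left _ _
    have h2 : (1/2) * (ρ * Real.sqrt N) / N = w/2 := by
      rw [hw_def, div_eq_div_iff hn0.ne' (by norm_num : (2:ℝ) ≠ 0)]
      field_simp
      nlinarith [hsn]
    linarith [hx1]
  intro y hy
  simp only [Set.mem_preimage, Set.mem_setOf_eq, Set.mem_Icc] at hy
  obtain ⟨⟨hs1, hs2⟩, hq1, hq2⟩ := hy
  set s : ℝ := b.repr y 0 with hs_def
  set q : ℝ := ∑ i ∈ Finset.univ.erase 0, (b.repr y) i ^ 2 with hq_def
  -- identities
  have hsumsq : s^2 + q = ‖y‖^2 := by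
    have h1 : ‖b.repr y‖^2 = ∑ i, (b.repr y) i ^ 2 := by
      rw [EuclideanSpace.norm_eq, Real.sq_sqrt (Finset.sum_nonneg fun i _ => by positivity)]
      exact Finset.sum_congr rfl fun i _ => by rw [Real.norm_eq_abs, sq_abs]
    have h2 := Finset.sum_erase_add Finset.univ (fun i => (b.repr y) i ^ 2)
      (Finset.mem_univ (0 : Fin (m+1)))
    rw [b.repr.norm_map y] at h1
    simp only at h2
    rw [← h1] at h2
    linarith [h2]
  have hinner : inner ℝ x₀ y = ‖x₀‖ * s := by
    have h1 : s = inner ℝ (b 0) y := b.repr_apply_apply y 0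
    rw [hb, real_inner_smul_left] at h1
    rw [h1]
    field_simp
  have hnormadd : ‖x₀ + y‖^2 = ‖x₀‖^2 + 2*(‖x₀‖*s) + ‖y‖^2 := by
    rw [← hinner]
    exact norm_add_sq_real x₀ y
  -- bounds in terms of w
  have hs1' : 2*w ≤ s := by rw [hw_def, ← mul_div_assoc]; exact hs1
  have hs2' : s ≤ 3*w := by rw [hw_def, ← mul_div_assoc]; exact hs2
  have hq1' : ρ^2 - 10*w^2 ≤ q := by
    have e : ρ^2*(1-10/N) = ρ^2 - 10*(ρ^2/N) := by ring
    rw [hw2, ← e]; exact hq1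
  have hq2' : q ≤ ρ^2 - 9*w^2 := by
    have e : ρ^2*(1-9/N) = ρ^2 - 9*(ρ^2/N) := by ring
    rw [hw2, ← e]; exact hq2
  have hnormy2 : s^2 + q = ‖y‖^2 := hsumsq
  constructor
  · exact arith_norm_le ρ w s q ‖y‖ hρ0 hw0 hs1' hs2' hq2' hnormy2 (norm_nonneg y)
  · have hZ : ‖x₀ + y‖^2 = ‖x₀‖^2 + 2*(‖x₀‖*s) + (s^2 + q) := by
      rw [hnormadd, hnormy2]
    have hkey : 1 + ρ^2 < ‖x₀ + y‖^2 :=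
      arith_key ρ w s q ‖x₀‖ ‖x₀ + y‖ hρ0 hw0 hw10 hA hs1' hs2' hq1' hZ
    have hpos : 0 < ‖x₀ + y‖ := by
      rcases (norm_nonneg (x₀ + y)).lt_or_eq with h | h
      · exact h
      · exfalso; rw [← h] at hkey; nlinarith
    exact (Real.sqrt_lt' hpos).2 hkey

lemma pow_sub_pow_ge (x y : ℝ) (h0 : 0 ≤ y) (hyx : y ≤ x) (k : ℕ) :
    ((k:ℝ)+1) * y^k * (x - y) ≤ x^(k+1) - y^(k+1) := by
  rw [← geom_sum₂_mul x y (k+1)]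
  apply mul_le_mul_of_nonneg_right _ (by linarith)
  have hterm : ∀ i ∈ Finset.range (k+1), y^k ≤ x^i * y^(k-i) := by
    intro i hi
    have hik : i ≤ k := Nat.lt_succ_iff.1 (Finset.mem_range.1 hi)
    calc y^k = y^i * y^(k-i) := by rw [← pow_add]; congr 1; omega
      _ ≤ x^i * y^(k-i) := by
          apply mul_le_mul_of_nonneg_right (pow_le_pow_left₀ h0 hyx i) (by positivity)
  calc ((k:ℝ)+1) * y^k = (Finset.range (k+1)).card • (y^k) := by
        rw [Finset.card_range, nsmul_eq_mul]; push_cast; ring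
    _ ≤ ∑ i ∈ Finset.range (k+1), x^i * y^(k-i) := Finset.card_nsmul_le_sum _ _ _ hterm
    _ = ∑ i ∈ Finset.range (k+1), x^i * y^(k+1-1-i) := by norm_num

lemma sqrt_pow_lower {n : ℕ} (hn : 101 ≤ n) :
    (1:ℝ)/406 ≤ Real.sqrt (1 - 10/(n:ℝ)) ^ n := by
  have hn0 : (0:ℝ) < n := by positivity
  have hn101 : (101:ℝ) ≤ n := by exact_mod_cast hn
  have hx0 : (0:ℝ) < 1 - 10/(n:ℝ) := by
    rw [sub_pos, div_lt_one hn0]; linarith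
  set x : ℝ := 1 - 10/(n:ℝ) with hx_def
  have hsx : Real.sqrt x = Real.exp (Real.log x / 2) := by
    rw [← Real.log_sqrt hx0.le, Real.exp_log (Real.sqrt_pos.2 hx0)]
  have hpow : Real.sqrt x ^ n = Real.exp ((n:ℝ) * (Real.log x / 2)) := by
    rw [hsx, ← Real.exp_nat_mul]
  rw [hpow]
  have hlog : 1 - x⁻¹ ≤ Real.log x := by
    have h := Real.log_le_sub_one_of_pos (inv_pos.2 hx0)
    rw [Real.log_inv] at h
    linarith
  have hne : ((n:ℝ)-10) ≠ 0 := by linarith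
  have hxinv : x⁻¹ = (n:ℝ)/((n:ℝ)-10) := by
    rw [hx_def, show (1:ℝ) - 10/(n:ℝ) = ((n:ℝ)-10)/(n:ℝ) by field_simp, inv_div]
  have hlog2 : (-6:ℝ) ≤ (n:ℝ) * (Real.log x / 2) := by
    have h1 : 1 - (n:ℝ)/((n:ℝ)-10) = -10/((n:ℝ)-10) := by
      rw [eq_div_iff hne]; field_simp; ring
    have h2 : (-12:ℝ)/(n:ℝ) ≤ Real.log x := by
      refine le_trans ?_ hlog
      rw [hxinv, h1, div_le_div_iff₀ hn0 (by linarith)]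
      nlinarith
    have h3 : (-12:ℝ) ≤ (n:ℝ) * Real.log x := by
      have := mul_le_mul_of_nonneg_left h2 hn0.le
      rw [mul_div_cancel₀] at this
      · linarith
      · exact hn0.ne'
    linarith
  have h6 : Real.exp (6:ℝ) ≤ 406 := by
    calc Real.exp (6:ℝ) = Real.exp 1 ^ 6 := by
          rw [← Real.exp_nat_mul]; norm_num
      _ ≤ 2.7182818286^6 :=
          pow_le_pow_left₀ (Real.exp_pos 1).le Real.exp_one_lt_d9.le 6
      _ ≤ 406 := by norm_num
  calc (1:ℝ)/406 ≤ Real.exp (-6) := by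
        rw [Real.exp_neg, one_div]
        exact inv_anti₀ (Real.exp_pos _) h6
    _ ≤ Real.exp ((n:ℝ) * (Real.log x / 2)) := Real.exp_le_exp.2 hlog2

lemma exists_good_basis {m : ℕ} (u : EuclideanSpace ℝ (Fin (m+1))) (hu : ‖u‖ = 1) :
    ∃ b : OrthonormalBasis (Fin (m+1)) ℝ (EuclideanSpace ℝ (Fin (m+1))), b 0 = u := by
  classical
  have card_eq : Module.finrank ℝ (EuclideanSpace ℝ (Fin (m+1))) = Fintype.card (Fin (m+1)) := by
    simp [finrank_euclideanSpace]
  have hv : Orthonormal ℝ (({0} : Set (Fin (m+1))).restrict (fun _ => u)) := by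
    rw [orthonormal_iff_ite]
    intro i j
    have hij : i = j := Subsingleton.elim i j
    subst hij
    rw [if_pos rfl]
    show (inner ℝ u u : ℝ) = 1
    rw [real_inner_self_eq_norm_mul_norm, hu]; norm_num
  obtain ⟨b, hb⟩ := hv.exists_orthonormalBasis_extension_of_card_eq card_eq
  exact ⟨b, hb 0 rfl⟩
set_option maxHeartbeats 1000000 in
lemma final_real {ρ : ℝ} (hρ0 : 0 < ρ) (hρ1 : ρ < 1) {m : ℕ} (hm : 100 ≤ m) :
    (1/16:ℝ)^100 * (ρ^(m+1) * (Real.sqrt π ^ (m+1) / Real.Gamma (((m:ℝ)+1)/2+1)))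
      ≤ (ρ/Real.sqrt ((m:ℝ)+1)) *
        ((Real.sqrt (ρ^2*(1-9/((m:ℝ)+1))))^m - (Real.sqrt (ρ^2*(1-10/((m:ℝ)+1))))^m) *
        (Real.sqrt π ^ m / Real.Gamma ((m:ℝ)/2+1)) := by
  set N : ℝ := (m:ℝ)+1 with hN_def
  have hm' : (100:ℝ) ≤ (m:ℝ) := by exact_mod_cast hm
  have hN101 : (101:ℝ) ≤ N := by rw [hN_def]; linarith
  have hNpos : (0:ℝ) < N := by linarith
  have ht9 : (0:ℝ) < 1 - 9/N := by rw [sub_pos, div_lt_one hNpos]; linarith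
  have ht10 : (0:ℝ) < 1 - 10/N := by rw [sub_pos, div_lt_one hNpos]; linarith
  set sa : ℝ := Real.sqrt (1 - 9/N) with hsa_def
  set sb : ℝ := Real.sqrt (1 - 10/N) with hsb_def
  have hsa0 : 0 < sa := Real.sqrt_pos.2 ht9
  have hsb0 : 0 < sb := Real.sqrt_pos.2 ht10
  have h9N : (0:ℝ) ≤ 9/N := by positivity
  have h10N : (0:ℝ) ≤ 10/N := by positivity
  have hsa1 : sa ≤ 1 := Real.sqrt_le_one.2 (by linarith)
  have hsb1 : sb ≤ 1 := Real.sqrt_le_one.2 (by linarith)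
  have hsba : sb ≤ sa := Real.sqrt_le_sqrt (by rw [sub_le_sub_iff_left]; exact (div_le_div_iff_of_pos_right hNpos).2 (by norm_num))
  have hsa2 : sa^2 = 1 - 9/N := Real.sq_sqrt ht9.le
  have hsb2 : sb^2 = 1 - 10/N := Real.sq_sqrt ht10.le
  -- rewrite the sqrt of products
  have hra : Real.sqrt (ρ^2*(1-9/N)) = ρ * sa := by
    rw [Real.sqrt_mul (sq_nonneg ρ), Real.sqrt_sq hρ0.le]
  have hrb : Real.sqrt (ρ^2*(1-10/N)) = ρ * sb := by
    rw [Real.sqrt_mul (sq_nonneg ρ), Real.sqrt_sq hρ0.le]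
  rw [hra, hrb, mul_pow, mul_pow, ← mul_sub]
  -- lower bound for sa^m - sb^m
  obtain ⟨k, hk⟩ : ∃ k, m = k + 1 := ⟨m - 1, by omega⟩
  have hdiff : 1/(2*N) ≤ sa - sb := by
    rw [div_le_iff₀ (by positivity)]
    have hsq : N*(sa^2 - sb^2) = 1 := by
      rw [hsa2, hsb2]; field_simp; norm_num
    nlinarith [hsq, mul_nonneg (mul_nonneg hNpos.le (sub_nonneg.2 hsba))
      (show (0:ℝ) ≤ 2-(sa+sb) by linarith)]
  have hsbk : (1:ℝ)/406 ≤ sb^k := by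
    have h1 := sqrt_pow_lower (n := m+1) (by omega)
    have hcast : ((m+1:ℕ):ℝ) = N := by rw [hN_def]; push_cast; ring
    rw [hcast] at h1
    calc (1:ℝ)/406 ≤ sb^(m+1) := h1
      _ ≤ sb^k := pow_le_pow_of_le_one hsb0.le hsb1 (by omega)
  have hD : (1:ℝ)/1000 ≤ sa^m - sb^m := by
    have h1 : ((k:ℝ)+1) * sb^k * (sa - sb) ≤ sa^(k+1) - sb^(k+1) :=
      pow_sub_pow_ge sa sb hsb0.le hsba k
    have hkm : ((k:ℝ)+1) = (m:ℝ) := by rw [hk]; push_cast; ring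
    rw [← hk] at h1
    rw [hkm] at h1
    have e1 : (m:ℝ)*(1/406)*(1/(2*N)) ≤ (m:ℝ)*sb^k*(sa-sb) := by
      apply mul_le_mul _ hdiff (by positivity) (by positivity)
      apply mul_le_mul_of_nonneg_left hsbk (by positivity)
    have e2 : (1:ℝ)/1000 ≤ (m:ℝ)*(1/406)*(1/(2*N)) := by
      have hrw : (m:ℝ)*(1/406)*(1/(2*N)) = (m:ℝ)/(812*N) := by
        field_simp
        norm_num
      rw [hrw, div_le_div_iff₀ (by norm_num) (by positivity), hN_def]
      linarith
    linarith
  -- Gamma ratio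
  have hΓ : Real.sqrt (N/2) * Real.Gamma ((m:ℝ)/2+1) ≤ Real.Gamma (N/2+1) := by
    have h1 := gamma_ratio (t := N/2+1/2) (by linarith)
    rw [show N/2+1/2-1/2 = N/2 by ring, show N/2+1/2+1/2 = N/2+1 by ring] at h1
    rw [show (m:ℝ)/2+1 = N/2+1/2 by rw [hN_def]; ring]
    exact h1
  have hΓn : 0 < Real.Gamma (N/2+1) := Real.Gamma_pos_of_pos (by linarith)
  have hΓm : 0 < Real.Gamma ((m:ℝ)/2+1) := Real.Gamma_pos_of_pos (by positivity)
  have hsN : (10:ℝ) ≤ Real.sqrt N := by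
    rw [show (10:ℝ) = Real.sqrt 100 by
      rw [show (100:ℝ) = 10^2 by norm_num, Real.sqrt_sq]; norm_num]
    exact Real.sqrt_le_sqrt (by linarith)
  have hsNpos : (0:ℝ) < Real.sqrt N := by linarith
  have hπpos : (0:ℝ) < Real.sqrt π := Real.sqrt_pos.2 Real.pi_pos
  set c : ℝ := (1/16:ℝ)^100 with hc_def
  have hc0 : 0 < c := by positivity
  have hnum : c * Real.sqrt π * Real.sqrt 2 ≤ 1/1000 := by
    have hπ : Real.sqrt π ≤ 1.8 := by
      rw [show (1.8:ℝ) = Real.sqrt (1.8^2) by rw [Real.sqrt_sq]; norm_num]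
      exact Real.sqrt_le_sqrt (by nlinarith [Real.pi_lt_d2])
    have h2 : Real.sqrt 2 ≤ 1.5 := by
      rw [show (1.5:ℝ) = Real.sqrt (1.5^2) by rw [Real.sqrt_sq]; norm_num]
      exact Real.sqrt_le_sqrt (by norm_num)
    have hcsmall : c ≤ 1/2700 := by
      rw [hc_def]
      calc ((1:ℝ)/16)^100 ≤ (1/16)^3 :=
            pow_le_pow_of_le_one (by norm_num) (by norm_num) (by norm_num)
        _ ≤ 1/2700 := by norm_num
    have h20 : (0:ℝ) ≤ Real.sqrt 2 := Real.sqrt_nonneg 2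
    nlinarith
  have hsplit : Real.sqrt (N/2) * Real.sqrt 2 = Real.sqrt N := by
    rw [← Real.sqrt_mul (by positivity) 2]
    congr 1; ring
  have key : c * Real.sqrt π / Real.Gamma (N/2+1)
      ≤ (sa^m - sb^m) / (Real.sqrt N * Real.Gamma ((m:ℝ)/2+1)) := by
    rw [div_le_div_iff₀ hΓn (by positivity)]
    calc c * Real.sqrt π * (Real.sqrt N * Real.Gamma ((m:ℝ)/2+1))
        = (c * Real.sqrt π * Real.sqrt 2) * (Real.sqrt (N/2) * Real.Gamma ((m:ℝ)/2+1)) := by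
          rw [← hsplit]; ring
      _ ≤ (1/1000) * (Real.sqrt (N/2) * Real.Gamma ((m:ℝ)/2+1)) :=
          mul_le_mul_of_nonneg_right hnum (by positivity)
      _ ≤ (1/1000) * Real.Gamma (N/2+1) := by
          apply mul_le_mul_of_nonneg_left hΓ (by norm_num)
      _ ≤ (sa^m - sb^m) * Real.Gamma (N/2+1) :=
          mul_le_mul_of_nonneg_right hD hΓn.le
  calc c * (ρ^(m+1) * (Real.sqrt π ^ (m+1) / Real.Gamma (N/2+1)))
      = (ρ^(m+1) * Real.sqrt π ^ m) * (c * Real.sqrt π / Real.Gamma (N/2+1)) := by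
        rw [pow_succ]; ring
    _ ≤ (ρ^(m+1) * Real.sqrt π ^ m) *
        ((sa^m - sb^m) / (Real.sqrt N * Real.Gamma ((m:ℝ)/2+1))) :=
        mul_le_mul_of_nonneg_left key (by positivity)
    _ = (ρ/Real.sqrt N) * (ρ^m * (sa^m - sb^m)) *
        (Real.sqrt π ^ m / Real.Gamma ((m:ℝ)/2+1)) := by
        field_simp
        ring

theorem cap_volume_lower_bound :
    ∃ c₁ : ℝ, 0 < c₁ ∧
      ∀ (ρ : ℝ), ρ ∈ Set.Ioo (0 : ℝ) 1 →
      ∀ (n : ℕ), 2 ≤ n →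
      ∀ (x₀ : EuclideanSpace ℝ (Fin n)),
        1 - (1 / 2) * min (ρ * Real.sqrt n) 1 / n ≤ ‖x₀‖ → ‖x₀‖ ≤ 1 →
        ENNReal.ofReal c₁ * volume (Metric.closedBall (0 : EuclideanSpace ℝ (Fin n)) ρ)
          ≤ volume {y : EuclideanSpace ℝ (Fin n) |
              ‖y‖ ≤ ρ ∧ Real.sqrt (1 + ρ ^ 2) < ‖x₀ + y‖} := by
  refine ⟨(1/16:ℝ)^100, by positivity, ?_⟩
  rintro ρ ⟨hρ0, hρ1⟩ n hn x₀ hx1 hx2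
  haveI : Nonempty (Fin n) := ⟨⟨0, by omega⟩⟩
  have hKnn : (0:ℝ) ≤ Real.sqrt π ^ n / Real.Gamma ((n:ℝ)/2+1) := by
    have := Real.Gamma_pos_of_pos (show (0:ℝ) < (n:ℝ)/2+1 by positivity)
    positivity
  have hvolball : volume (Metric.closedBall (0 : EuclideanSpace ℝ (Fin n)) ρ)
      = ENNReal.ofReal (ρ^n * (Real.sqrt π ^ n / Real.Gamma ((n:ℝ)/2+1))) := by
    rw [EuclideanSpace.volume_closedBall, Fintype.card_fin,
      ← ENNReal.ofReal_pow hρ0.le, ← ENNReal.ofReal_mul (by positivity)]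
  by_cases hsmall : n ≤ 100
  · -- small dimensions : inscribed ball
    have hsub := small_ball_subset hρ0 hρ1 hn x₀ hx1
    have hmono : volume (closedBall (((15/16)*ρ/‖x₀‖) • x₀) (ρ/16)) ≤ volume {y : EuclideanSpace ℝ (Fin n) | ‖y‖ ≤ ρ ∧ Real.sqrt (1 + ρ ^ 2) < ‖x₀ + y‖} := measure_mono hsub
    refine le_trans ?_ hmono
    have hvolsmall : volume (closedBall (((15/16)*ρ/‖x₀‖) • x₀) (ρ/16))
        = ENNReal.ofReal ((ρ/16)^n * (Real.sqrt π ^ n / Real.Gamma ((n:ℝ)/2+1))) := by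
      rw [EuclideanSpace.volume_closedBall, Fintype.card_fin,
        ← ENNReal.ofReal_pow (by positivity), ← ENNReal.ofReal_mul (by positivity)]
    rw [hvolball, hvolsmall, ← ENNReal.ofReal_mul (by positivity)]
    apply ENNReal.ofReal_le_ofReal
    have h16 : ((1:ℝ)/16)^100 ≤ (1/16)^n :=
      pow_le_pow_of_le_one (by norm_num) (by norm_num) hsmall
    have hρ16 : (ρ/16)^n = (1/16)^n * ρ^n := by
      rw [div_pow, div_pow, one_pow]; ring
    rw [hρ16]
    have : ((1:ℝ)/16)^100 * ρ^n ≤ (1/16)^n * ρ^n :=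
      mul_le_mul_of_nonneg_right h16 (by positivity)
    calc ((1:ℝ)/16)^100 * (ρ^n * (Real.sqrt π ^ n / Real.Gamma ((n:ℝ)/2+1)))
        = ((1:ℝ)/16)^100 * ρ^n * (Real.sqrt π ^ n / Real.Gamma ((n:ℝ)/2+1)) := by ring
      _ ≤ (1/16)^n * ρ^n * (Real.sqrt π ^ n / Real.Gamma ((n:ℝ)/2+1)) :=
          mul_le_mul_of_nonneg_right this hKnn
  · -- large dimensions
    push_neg at hsmall
    obtain ⟨m, rfl⟩ : ∃ m, n = m + 1 := ⟨n-1, by omega⟩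
    have hm : 100 ≤ m := by omega
    haveI : Nonempty (Fin m) := ⟨⟨0, by omega⟩⟩
    have hcast : ((m+1:ℕ):ℝ) = (m:ℝ)+1 := by push_cast; ring
    have hN101 : (101:ℝ) ≤ (m:ℝ)+1 := by
      have : (100:ℝ) ≤ (m:ℝ) := by exact_mod_cast hm
      linarith
    -- x₀ is nonzero
    have hx0 : 0 < ‖x₀‖ := by
      have h1 : min (ρ * Real.sqrt ((m+1:ℕ):ℝ)) 1 ≤ 1 := min_le_right _ _
      have h0 : 0 ≤ min (ρ * Real.sqrt ((m+1:ℕ):ℝ)) 1 := le_min (by positivity) (by norm_num)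
      have h2 : (1:ℝ) ≤ ((m+1:ℕ):ℝ) := by exact_mod_cast Nat.succ_le_succ (Nat.zero_le m)
      have h3 : (1/2) * min (ρ * Real.sqrt ((m+1:ℕ):ℝ)) 1 / ((m+1:ℕ):ℝ) ≤ 1/2 := by
        calc (1/2) * min (ρ * Real.sqrt ((m+1:ℕ):ℝ)) 1 / ((m+1:ℕ):ℝ)
            ≤ (1/2) * min (ρ * Real.sqrt ((m+1:ℕ):ℝ)) 1 := div_le_self (by positivity) h2
          _ ≤ (1/2) * 1 := by linarith
          _ = 1/2 := by norm_num
      linarith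
    -- unit vector and adapted orthonormal basis
    set u : EuclideanSpace ℝ (Fin (m+1)) := ‖x₀‖⁻¹ • x₀ with hu_def
    have hu : ‖u‖ = 1 := by
      rw [hu_def, norm_smul, Real.norm_eq_abs, abs_inv, abs_norm]
      field_simp
    obtain ⟨b, hb⟩ := exists_good_basis u hu
    have hx1' : 1 - (1 / 2) * min (ρ * Real.sqrt ((m:ℝ)+1)) 1 / ((m:ℝ)+1) ≤ ‖x₀‖ := by
      push_cast at hx1; exact hx1
    have hsub := big_subset hρ0 hρ1 (by omega) x₀ hx1' hx2 b hb hx0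
    -- the slab region
    set R' : Set (EuclideanSpace ℝ (Fin (m+1))) := {v : EuclideanSpace ℝ (Fin (m+1)) |
        v 0 ∈ Set.Icc (2*ρ/Real.sqrt ((m:ℝ)+1)) (3*ρ/Real.sqrt ((m:ℝ)+1)) ∧
        (∑ i ∈ Finset.univ.erase 0, v i ^ 2) ∈
          Set.Icc (ρ^2*(1-10/((m:ℝ)+1))) (ρ^2*(1-9/((m:ℝ)+1)))} with hR'_def
    have hmeas0 : Measurable fun v : EuclideanSpace ℝ (Fin (m+1)) => v 0 :=
      (measurable_pi_apply 0).comp ((MeasurableEquiv.toLp 2 (Fin (m+1) → ℝ)).symm).measurable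
    have hmeassum : Measurable fun v : EuclideanSpace ℝ (Fin (m+1)) =>
        (∑ i ∈ Finset.univ.erase 0, v i ^ 2) := by
      apply Finset.measurable_sum
      intro i _
      exact (((measurable_pi_apply i).comp
        ((MeasurableEquiv.toLp 2 (Fin (m+1) → ℝ)).symm).measurable).pow_const 2)
    have hR'meas : MeasurableSet R' := by
      rw [hR'_def]
      exact (hmeas0 measurableSet_Icc).inter (hmeassum measurableSet_Icc)
    have hpre : volume (⇑b.repr ⁻¹' R') = volume R' :=
      b.measurePreserving_repr.measure_preimage hR'meas.nullMeasurableSet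
    have hc10 : (0:ℝ) ≤ ρ^2*(1-10/((m:ℝ)+1)) := by
      have : 10/((m:ℝ)+1) ≤ 1 := by
        rw [div_le_one (by linarith)]; linarith
      nlinarith
    have hc12 : ρ^2*(1-10/((m:ℝ)+1)) ≤ ρ^2*(1-9/((m:ℝ)+1)) := by
      have : 9/((m:ℝ)+1) ≤ 10/((m:ℝ)+1) :=
        (div_le_div_iff_of_pos_right (by linarith)).2 (by norm_num)
      nlinarith
    have hslab := slab_volume (m := m) (2*ρ/Real.sqrt ((m:ℝ)+1)) (3*ρ/Real.sqrt ((m:ℝ)+1))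
      (ρ^2*(1-10/((m:ℝ)+1))) (ρ^2*(1-9/((m:ℝ)+1))) hc10 hc12
    -- volumes of the balls in dimension m
    have hΓm : (0:ℝ) < Real.Gamma ((m:ℝ)/2+1) := Real.Gamma_pos_of_pos (by positivity)
    set Km : ℝ := Real.sqrt π ^ m / Real.Gamma ((m:ℝ)/2+1) with hKm_def
    have hKm0 : 0 ≤ Km := by positivity
    have hvol2 : volume (closedBall (0 : EuclideanSpace ℝ (Fin m))
        (Real.sqrt (ρ^2*(1-9/((m:ℝ)+1)))))
        = ENNReal.ofReal ((Real.sqrt (ρ^2*(1-9/((m:ℝ)+1))))^m * Km) := by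
      rw [EuclideanSpace.volume_closedBall, Fintype.card_fin,
        ← ENNReal.ofReal_pow (Real.sqrt_nonneg _), ← ENNReal.ofReal_mul (by positivity)]
    have hvol1 : volume (ball (0 : EuclideanSpace ℝ (Fin m))
        (Real.sqrt (ρ^2*(1-10/((m:ℝ)+1)))))
        = ENNReal.ofReal ((Real.sqrt (ρ^2*(1-10/((m:ℝ)+1))))^m * Km) := by
      rw [EuclideanSpace.volume_ball, Fintype.card_fin,
        ← ENNReal.ofReal_pow (Real.sqrt_nonneg _), ← ENNReal.ofReal_mul (by positivity)]
    have hdiffvol : volume (closedBall (0 : EuclideanSpace ℝ (Fin m))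
          (Real.sqrt (ρ^2*(1-9/((m:ℝ)+1)))))
        - volume (ball (0 : EuclideanSpace ℝ (Fin m))
          (Real.sqrt (ρ^2*(1-10/((m:ℝ)+1)))))
        = ENNReal.ofReal ((Real.sqrt (ρ^2*(1-9/((m:ℝ)+1))))^m * Km
            - (Real.sqrt (ρ^2*(1-10/((m:ℝ)+1))))^m * Km) := by
      rw [hvol2, hvol1, ← ENNReal.ofReal_sub _ (by positivity)]
    -- the real inequality
    have hreal : (1/16:ℝ)^100 * (ρ^(m+1) * (Real.sqrt π ^ (m+1) / Real.Gamma (((m:ℝ)+1)/2+1)))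
        ≤ (3*ρ/Real.sqrt ((m:ℝ)+1) - 2*ρ/Real.sqrt ((m:ℝ)+1)) *
          ((Real.sqrt (ρ^2*(1-9/((m:ℝ)+1))))^m * Km
            - (Real.sqrt (ρ^2*(1-10/((m:ℝ)+1))))^m * Km) := by
      have h1 := final_real hρ0 hρ1 hm
      have h2 : (3*ρ/Real.sqrt ((m:ℝ)+1) - 2*ρ/Real.sqrt ((m:ℝ)+1)) = ρ/Real.sqrt ((m:ℝ)+1) := by
        rw [div_sub_div_same]; ring_nf
      rw [h2, hKm_def]
      calc (1/16:ℝ)^100 * (ρ^(m+1) * (Real.sqrt π ^ (m+1) / Real.Gamma (((m:ℝ)+1)/2+1)))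
          ≤ (ρ/Real.sqrt ((m:ℝ)+1)) *
            ((Real.sqrt (ρ^2*(1-9/((m:ℝ)+1))))^m - (Real.sqrt (ρ^2*(1-10/((m:ℝ)+1))))^m) *
            (Real.sqrt π ^ m / Real.Gamma ((m:ℝ)/2+1)) := h1
        _ = (ρ/Real.sqrt ((m:ℝ)+1)) *
            ((Real.sqrt (ρ^2*(1-9/((m:ℝ)+1))))^m * (Real.sqrt π ^ m / Real.Gamma ((m:ℝ)/2+1))
              - (Real.sqrt (ρ^2*(1-10/((m:ℝ)+1))))^m * (Real.sqrt π ^ m / Real.Gamma ((m:ℝ)/2+1))) := by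
            ring
    -- put everything together
    rw [hvolball, hcast]
    calc ENNReal.ofReal ((1/16:ℝ)^100) * ENNReal.ofReal (ρ^(m+1) * (Real.sqrt π ^ (m+1) / Real.Gamma (((m:ℝ)+1)/2+1)))
        = ENNReal.ofReal ((1/16:ℝ)^100 * (ρ^(m+1) * (Real.sqrt π ^ (m+1) / Real.Gamma (((m:ℝ)+1)/2+1)))) := by
          rw [← ENNReal.ofReal_mul (by positivity)]
      _ ≤ ENNReal.ofReal ((3*ρ/Real.sqrt ((m:ℝ)+1) - 2*ρ/Real.sqrt ((m:ℝ)+1)) *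
            ((Real.sqrt (ρ^2*(1-9/((m:ℝ)+1))))^m * Km
              - (Real.sqrt (ρ^2*(1-10/((m:ℝ)+1))))^m * Km)) :=
          ENNReal.ofReal_le_ofReal hreal
      _ = ENNReal.ofReal (3*ρ/Real.sqrt ((m:ℝ)+1) - 2*ρ/Real.sqrt ((m:ℝ)+1)) *
            ENNReal.ofReal ((Real.sqrt (ρ^2*(1-9/((m:ℝ)+1))))^m * Km
              - (Real.sqrt (ρ^2*(1-10/((m:ℝ)+1))))^m * Km) := by
          rw [← ENNReal.ofReal_mul (show (0:ℝ) ≤ 3*ρ/Real.sqrt ((m:ℝ)+1) - 2*ρ/Real.sqrt ((m:ℝ)+1) by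
            rw [div_sub_div_same]
            apply div_nonneg (by linarith) (Real.sqrt_nonneg _))]
      _ = volume R' := by rw [hslab, hdiffvol]
      _ = volume (⇑b.repr ⁻¹' R') := hpre.symm
      _ ≤ volume {y : EuclideanSpace ℝ (Fin (m+1)) | ‖y‖ ≤ ρ ∧ Real.sqrt (1 + ρ ^ 2) < ‖x₀ + y‖} :=
          measure_mono hsub
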